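/- Assume (D+) and let (V,u) be a weak solution of the Lifshitz–Slyozov system with total mass M, with V₀ > d(0) and ρ₀ > 0. Let x̄ > 0 be the unique solution of M = ρ₀ x̄ + d(x̄). Then lim_{t→∞} V(t) = d(x̄), and for every z ≥ 0, lim_{t→∞} X(t,z) = x̄. -/

import Mathlib

open Set Filter Topology MeasureTheory

/-- Assumption (D+): `d : [0,∞) → [0,∞)` is C¹ with `0 < α ≤ d'(x) ≤ β` for all `x ≥ 0`. -/
structure DPlus (d d' : ℝ → ℝ) (α β : ℝ) : Prop where
  nonneg : ∀ x ∈ Set.Ici (0:ℝ), 0 ≤ d x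
  hasDeriv : ∀ x ∈ Set.Ici (0:ℝ), HasDerivWithinAt d (d' x) (Set.Ici 0) x
  contDeriv : ContinuousOn d' (Set.Ici 0)
  alpha_pos : 0 < α
  deriv_lb : ∀ x ∈ Set.Ici (0:ℝ), α ≤ d' x
  deriv_ub : ∀ x ∈ Set.Ici (0:ℝ), d' x ≤ β

/-- A C¹ test function `φ` (with derivative `φ'`) on `[0,∞)` satisfying
`|φ(x)| ≤ C(1+x²)` and `|φ'(x)| ≤ C(1+x)` for some constant `C`. -/
def IsTest (φ φ' : ℝ → ℝ) : Prop :=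
  (∀ x ∈ Set.Ici (0:ℝ), HasDerivWithinAt φ (φ' x) (Set.Ici 0) x) ∧
  ContinuousOn φ' (Set.Ici 0) ∧
  ∃ C : ℝ, ∀ x ∈ Set.Ici (0:ℝ), |φ x| ≤ C * (1 + x ^ 2) ∧ |φ' x| ≤ C * (1 + x)

/-- Weak solution of the Lifshitz–Slyozov system with nucleation parameter `ε`
(`ε = 0`: no nucleation; `ε = 1`: nucleation with nucleus size `i0`) and total mass `M`:
`V` is C¹ on `[0,∞)`, `u(t,·) ≥ 0` with `(1+x²)u(t,x)` integrable, mass conservation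
`V(t) + ∫₀^∞ x u(t,x) dx = M` holds, and for every test function `φ`,
`d/dt ∫₀^∞ φ(x)u(t,x)dx = ∫₀^∞ φ'(x)(V(t)−d(x))u(t,x)dx + ε φ(0) V(t)^{i0}`. -/
structure WeakSolLSN (d : ℝ → ℝ) (M ε : ℝ) (i0 : ℕ) (V : ℝ → ℝ) (u : ℝ → ℝ → ℝ) : Prop where
  u_nonneg : ∀ t ∈ Set.Ici (0:ℝ), ∀ x ∈ Set.Ici (0:ℝ), 0 ≤ u t x
  V_contDiff : ContDiffOn ℝ 1 V (Set.Ici 0)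
  u_int : ∀ t ∈ Set.Ici (0:ℝ), IntegrableOn (fun x => (1 + x ^ 2) * u t x) (Set.Ioi 0)
  mass : ∀ t ∈ Set.Ici (0:ℝ), V t + ∫ x in Set.Ioi (0:ℝ), x * u t x = M
  weak : ∀ φ φ' : ℝ → ℝ, IsTest φ φ' → ∀ t ∈ Set.Ici (0:ℝ),
    HasDerivWithinAt (fun s => ∫ x in Set.Ioi (0:ℝ), φ x * u s x)
      ((∫ x in Set.Ioi (0:ℝ), φ' x * (V t - d x) * u t x) + ε * φ 0 * V t ^ i0)
      (Set.Ici 0) t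

/-- Theorem 1.2, item 2: under (D+), for a weak solution of the
Lifshitz–Slyozov system (ε = 0) with total mass `M`, `V₀ > d(0)` and `ρ₀ > 0`,
writing `x̄ > 0` for the unique solution of `M = ρ₀ x̄ + d(x̄)`, one has
`V(t) → d(x̄)` and `X(t,z) → x̄` for every characteristic through `z ≥ 0`. -/
lemma LSaux.mono_on {S : Set ℝ} (hS : Convex ℝ S) {f f' : ℝ → ℝ}
    (hf : ∀ t ∈ S, HasDerivWithinAt f (f' t) S t)
    (h0 : ∀ t ∈ interior S, 0 ≤ f' t) : MonotoneOn f S := by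
  refine monotoneOn_of_deriv_nonneg hS (fun t ht => (hf t ht).continuousWithinAt) ?_ ?_
  · intro t ht
    exact (((hf t (interior_subset ht)).hasDerivAt
      (mem_interior_iff_mem_nhds.mp ht)).differentiableAt).differentiableWithinAt
  · intro t ht
    rw [((hf t (interior_subset ht)).hasDerivAt (mem_interior_iff_mem_nhds.mp ht)).deriv]
    exact h0 t ht

lemma LSaux.anti_on {S : Set ℝ} (hS : Convex ℝ S) {f f' : ℝ → ℝ}
    (hf : ∀ t ∈ S, HasDerivWithinAt f (f' t) S t)
    (h0 : ∀ t ∈ interior S, f' t ≤ 0) : AntitoneOn f S := by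
  have H := LSaux.mono_on hS (f := fun t => -f t) (f' := fun t => -f' t)
    (fun t ht => (hf t ht).neg) (fun t ht => by simp only [neg_nonneg]; exact h0 t ht)
  intro a ha b hb hab
  have h2 : -f a ≤ -f b := H ha hb hab
  linarith

/-- If `w' ≤ -c < 0` wherever `w ≥ ε` on `[a,b]`, and `w a ≤ ε`, then `w b ≤ ε`. -/
lemma LSaux.no_upcross {w w' : ℝ → ℝ} {a b ε c : ℝ} (hc : 0 < c) (hab : a ≤ b)
    (hw : ∀ t ∈ Icc a b, HasDerivWithinAt w (w' t) (Icc a b) t)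
    (hup : ∀ t ∈ Icc a b, ε ≤ w t → w' t ≤ -c)
    (ha : w a ≤ ε) : w b ≤ ε := by
  by_contra hb
  push_neg at hb
  have hcont : ContinuousOn w (Icc a b) := fun t ht => (hw t ht).continuousWithinAt
  set S : Set ℝ := {s ∈ Icc a b | w s ≤ ε} with hS
  have hSne : S.Nonempty := ⟨a, ⟨le_refl a, hab⟩, ha⟩
  have hSbdd : BddAbove S := ⟨b, fun s hs => hs.1.2⟩
  have hSclosed : IsClosed S := by
    have h := hcont.preimage_isClosed_of_isClosed isClosed_Icc (isClosed_Iic (a := ε))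
    have : S = Icc a b ∩ w ⁻¹' Iic ε := by
      ext s
      simp only [hS, mem_sep_iff, mem_inter_iff, mem_preimage, mem_Iic]
    rw [this]
    exact h
  set s₀ := sSup S with hs₀
  have hs₀S : s₀ ∈ S := hSclosed.csSup_mem hSne hSbdd
  have hs₀b : s₀ < b := by
    rcases lt_or_eq_of_le hs₀S.1.2 with h | h
    · exact h
    · exact absurd (h ▸ hs₀S.2) (not_le.mpr hb)
  have hgt : ∀ s ∈ Ioc s₀ b, ε < w s := by
    intro s hs
    by_contra h
    push_neg at h
    have hsS : s ∈ S := ⟨⟨hs₀S.1.1.trans hs.1.le, hs.2⟩, h⟩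
    exact absurd (le_csSup hSbdd hsS) (not_le.mpr hs.1)
  have hwb : ∀ s₁ ∈ Ioc s₀ b, w b ≤ w s₁ := by
    intro s₁ hs₁
    have hsub : Icc s₁ b ⊆ Icc a b := Icc_subset_Icc (hs₀S.1.1.trans hs₁.1.le) le_rfl
    refine LSaux.anti_on (convex_Icc s₁ b) (f := w) (f' := w')
      (fun t ht => (hw t (hsub ht)).mono hsub) ?_ ⟨le_refl s₁, hs₁.2⟩ ⟨hs₁.2, le_refl b⟩ hs₁.2
    intro t ht
    rw [interior_Icc] at ht
    have htmem : t ∈ Ioc s₀ b := ⟨hs₁.1.trans ht.1, ht.2.le⟩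
    have := hup t (hsub ⟨ht.1.le, ht.2.le⟩) (hgt t htmem).le
    linarith
  have hlim : ContinuousWithinAt w (Ioc s₀ b) s₀ :=
    (hcont.continuousWithinAt hs₀S.1).mono (fun x hx => ⟨hs₀S.1.1.trans hx.1.le, hx.2⟩)
  have hne : (𝓝[Ioc s₀ b] s₀).NeBot := by
    rw [nhdsWithin_Ioc_eq_nhdsGT hs₀b]
    infer_instance
  have hfinal : w b ≤ w s₀ := by
    refine ge_of_tendsto hlim ?_
    filter_upwards [self_mem_nhdsWithin] with s hs using hwb s hs
  linarith [hs₀S.2]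

/-- Trap lemma: if the derivative pushes `w` towards `[-ε, ε]` whenever it is outside,
then eventually `|w| ≤ ε`. -/
lemma LSaux.trap {w w' : ℝ → ℝ} {T ε c : ℝ} (hc : 0 < c) (hε : 0 < ε)
    (hw : ∀ t ∈ Ici T, HasDerivWithinAt w (w' t) (Ici T) t)
    (hup : ∀ t ∈ Ici T, ε ≤ w t → w' t ≤ -c)
    (hdn : ∀ t ∈ Ici T, w t ≤ -ε → c ≤ w' t) :
    ∃ T', ∀ t ≥ T', |w t| ≤ ε := by
  have hcont : ContinuousOn w (Ici T) := fun t ht => (hw t ht).continuousWithinAt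
  have exits : ∀ (v v' : ℝ → ℝ), (∀ t ∈ Ici T, HasDerivWithinAt v (v' t) (Ici T) t) →
      (∀ t ∈ Ici T, ε ≤ v t → v' t ≤ -c) → ¬ (∀ t ∈ Ici T, ε < v t) := by
    intro v v' hv hvup hall
    have hanti : AntitoneOn (fun t => v t + c * t) (Ici T) := by
      refine LSaux.anti_on (convex_Ici T) (f := fun t => v t + c * t)
        (f' := fun t => v' t + c) ?_ ?_
      · intro t ht
        have hct : HasDerivWithinAt (fun s : ℝ => c * s) c (Ici T) t := by
          simpa using ((hasDerivAt_id t).const_mul c).hasDerivWithinAt (s := Ici T)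
        exact (hv t ht).add hct
      · intro t ht
        rw [interior_Ici] at ht
        have := hvup t (Set.mem_Ici.mpr (le_of_lt ht)) (hall t (Set.mem_Ici.mpr (le_of_lt ht))).le
        show v' t + c ≤ 0
        linarith
    have hvT : ε < v T := hall T (le_refl T)
    set A := (v T - ε + 1) / c with hA
    have hA0 : 0 ≤ A := div_nonneg (by linarith) hc.le
    have hT1 : T ≤ T + A := by linarith
    have hkey : v (T + A) + c * (T + A) ≤ v T + c * T :=
      hanti (le_refl T) hT1 hT1
    have hcA : c * A = v T - ε + 1 := by
      rw [hA, mul_div_cancel₀ _ hc.ne']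
    have := hall (T + A) hT1
    nlinarith
  by_cases hin : ∃ t₀ ∈ Ici T, |w t₀| ≤ ε
  · obtain ⟨t₀, ht₀, hwt₀⟩ := hin
    refine ⟨t₀, fun t ht => ?_⟩
    have hsub : Icc t₀ t ⊆ Ici T := fun s hs => ht₀.trans hs.1
    rw [abs_le] at hwt₀ ⊢
    constructor
    · have h2 : -w t ≤ ε := by
        refine LSaux.no_upcross (w := fun s => -w s) (w' := fun s => -w' s) hc ht
          (fun s hs => (hw s (hsub hs)).neg.mono hsub) ?_
          (show -w t₀ ≤ ε by linarith [hwt₀.1])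
        intro s hs h
        have h4 : ε ≤ -w s := h
        have h3 : w s ≤ -ε := by linarith
        have := hdn s (hsub hs) h3
        show -w' s ≤ -c
        linarith
      linarith
    · exact LSaux.no_upcross hc ht (fun s hs => ((hw s (hsub hs)).mono hsub))
        (fun s hs h => hup s (hsub hs) h) hwt₀.2
  · push_neg at hin
    exfalso
    rcases lt_or_ge ε (w T) with hT | hT
    · refine exits w w' hw hup (fun t ht => ?_)
      rcases lt_or_ge ε (w t) with h' | h'
      · exact h'
      · exfalso
        have hwtneg : w t < -ε := by
          rcases lt_or_ge (w t) (-ε) with h | h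
          · exact h
          · exact absurd (abs_le.mpr ⟨h, h'⟩) (not_le.mpr (hin t ht))
        have hIVT : ε ∈ w '' Icc T t := by
          apply intermediate_value_Icc' ht (hcont.mono Icc_subset_Ici_self)
          constructor <;> linarith
        obtain ⟨s, hs, hws⟩ := hIVT
        have := hin s hs.1
        rw [hws] at this
        rw [abs_of_pos hε] at this
        exact lt_irrefl _ this
    · have hTneg : w T < -ε := by
        rcases lt_or_ge (w T) (-ε) with h | h
        · exact h
        · exact absurd (abs_le.mpr ⟨h, hT⟩) (not_le.mpr (hin T (le_refl T)))
      refine exits (fun s => -w s) (fun s => -w' s)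
        (fun s hs => (hw s hs).neg) ?_ (fun t ht => ?_)
      · intro s hs h
        have h4 : ε ≤ -w s := h
        have h3 : w s ≤ -ε := by linarith
        have := hdn s hs h3
        show -w' s ≤ -c
        linarith
      · show ε < -w t
        rcases lt_or_ge (w t) (-ε) with h' | h'
        · linarith
        · exfalso
          have hwtpos : ε < w t := by
            rcases lt_or_ge ε (w t) with h | h
            · exact h
            · exact absurd (abs_le.mpr ⟨h', h⟩) (not_le.mpr (hin t ht))
          have hIVT : ε ∈ w '' Icc T t := by
            apply intermediate_value_Icc ht (hcont.mono Icc_subset_Ici_self)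
            constructor <;> linarith
          obtain ⟨s, hs, hws⟩ := hIVT
          have := hin s hs.1
          rw [hws, abs_of_pos hε] at this
          exact lt_irrefl _ this


lemma LSaux.hasDerivWithinAt_singleton (f : ℝ → ℝ) (x c : ℝ) :
    HasDerivWithinAt f c {x} x := by
  rw [hasDerivWithinAt_iff_tendsto_slope]
  have : ({x}:Set ℝ) \ {x} = ∅ := Set.diff_self
  rw [this, nhdsWithin_empty]
  exact tendsto_bot

lemma LSaux.lip_const_sub {G : ℝ → ℝ} {K : NNReal} (hG : LipschitzWith K G) (c : ℝ) :
    LipschitzWith K (fun x => c - G x) := by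
  apply LipschitzWith.of_dist_le_mul
  intro x y
  have h1 := hG.dist_le_mul x y
  have h2 : dist (c - G x) (c - G y) = dist (G x) (G y) := by
    rw [Real.dist_eq, Real.dist_eq, abs_sub_comm]
    ring_nf
  rw [h2]
  exact h1

lemma LSaux.ode_step {g G : ℝ → ℝ} (hg : Continuous g) {K : NNReal} (hK : 0 < (K:ℝ))
    (hG : LipschitzWith K G) (a y0 : ℝ) :
    ∃ Y : ℝ → ℝ, Y a = y0 ∧ ∀ t ∈ Icc a (a + (2*(K:ℝ))⁻¹),
      HasDerivWithinAt Y (g t - G (Y t)) (Icc a (a + (2*(K:ℝ))⁻¹)) t := by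
  set h : ℝ := (2*(K:ℝ))⁻¹ with hh
  have h0 : 0 < h := by positivity
  obtain ⟨C₀, hC₀⟩ := (isCompact_Icc (a := a) (b := a + h)).exists_bound_of_continuousOn
    hg.continuousOn
  set C1 : ℝ := |C₀| + |G y0| with hC1
  have hC1nn : 0 ≤ C1 := by positivity
  set R : ℝ := 2*(C1+1)*h with hR
  have hRpos : 0 < R := by positivity
  set C : ℝ := C1 + K*R with hC
  set Rn : NNReal := ⟨R, hRpos.le⟩ with hRn
  set Cn : NNReal := ⟨C, add_nonneg hC1nn (mul_nonneg K.2 hRpos.le)⟩ with hCn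
  have hpl : IsPicardLindelof (fun t x => g t - G x) (tmin := a) (tmax := a+h)
      ⟨a, ⟨le_refl a, by linarith⟩⟩ y0 Rn 0 Cn K := by
    constructor
    · intro t _
      exact (LSaux.lip_const_sub hG (g t)).lipschitzOnWith
    · intro x _
      exact (hg.sub continuous_const).continuousOn
    · intro t ht x hx
      have h1 : |g t| ≤ C₀ := hC₀ t ht
      have h2 : dist (G x) (G y0) ≤ K * dist x y0 := hG.dist_le_mul x y0
      have h3 : dist x y0 ≤ R := (Metric.mem_closedBall.mp hx : dist x y0 ≤ (Rn:ℝ))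
      have h4 : |G x - G y0| ≤ K * R := by
        rw [Real.dist_eq] at h2 h3
        calc |G x - G y0| ≤ K * |x - y0| := h2
        _ ≤ K * R := by
          apply mul_le_mul_of_nonneg_left h3 (by positivity)
      rw [Real.norm_eq_abs]
      have : |g t - G x| ≤ |g t| + |G x - G y0| + |G y0| := by
        have := abs_sub_abs_le_abs_sub (G x) (G y0)
        have h5 : g t - G x = g t - (G x - G y0) - G y0 := by ring
        rw [h5]
        calc |g t - (G x - G y0) - G y0| ≤ |g t - (G x - G y0)| + |G y0| := abs_sub _ _
        _ ≤ |g t| + |G x - G y0| + |G y0| := by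
            have := abs_sub (g t) (G x - G y0)
            linarith
      calc |g t - G x| ≤ |g t| + |G x - G y0| + |G y0| := this
      _ ≤ |C₀| + K*R + |G y0| := by
          have : |g t| ≤ |C₀| := h1.trans (le_abs_self C₀)
          linarith
      _ = C := by rw [hC, hC1]; ring
    · simp only [tsub_zero, NNReal.coe_zero, sub_zero]
      show C * max ((a+h) - a) (a - a) ≤ R
      have hmax : max ((a+h) - a) (a - a) = h := by
        rw [add_sub_cancel_left, sub_self, max_eq_left h0.le]
      rw [hmax]
      have hKh : (K:ℝ) * h = 1/2 := by
        rw [hh]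
        field_simp
      rw [hC]
      have : (C1 + K*R)*h = C1*h + (K*h)*R := by ring
      rw [this, hKh]
      rw [hR]
      nlinarith
  obtain ⟨Y, hY0, hY⟩ := hpl.exists_eq_forall_mem_Icc_hasDerivWithinAt₀
  exact ⟨Y, hY0, hY⟩

lemma LSaux.ode_global {g G : ℝ → ℝ} (hg : Continuous g) {K : NNReal} (hK : 0 < (K:ℝ))
    (hG : LipschitzWith K G) (x0 : ℝ) :
    ∃ X : ℝ → ℝ, X 0 = x0 ∧ ∀ t ∈ Ici (0:ℝ),
      HasDerivWithinAt X (g t - G (X t)) (Ici 0) t := by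
  set h : ℝ := (2*(K:ℝ))⁻¹ with hh
  have h0 : 0 < h := by positivity
  -- solutions on [0, n*h]
  have hP : ∀ n : ℕ, ∃ X : ℝ → ℝ, X 0 = x0 ∧ ∀ t ∈ Icc 0 ((n:ℝ)*h),
      HasDerivWithinAt X (g t - G (X t)) (Icc 0 ((n:ℝ)*h)) t := by
    intro n
    induction n with
    | zero =>
      refine ⟨fun _ => x0, rfl, ?_⟩
      intro t ht
      simp only [Nat.cast_zero, zero_mul, Icc_self] at ht ⊢
      rcases ht with rfl
      exact LSaux.hasDerivWithinAt_singleton _ _ _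
    | succ n ih =>
      obtain ⟨Xn, hXn0, hXn⟩ := ih
      set a : ℝ := (n:ℝ)*h with ha
      have ha0 : 0 ≤ a := by positivity
      obtain ⟨Y, hYa, hY⟩ := LSaux.ode_step hg hK hG a (Xn a)
      set b : ℝ := a + h with hb
      have hnb : ((n:ℝ)+1)*h = b := by rw [hb]; ring
      have hble : a ≤ b := by linarith
      set Z : ℝ → ℝ := fun t => if t ≤ a then Xn t else Y t with hZ
      have hZX : EqOn Z Xn (Icc 0 a) := fun s hs => if_pos hs.2
      have hZY : EqOn Z Y (Icc a b) := by
        intro s hs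
        by_cases hsa : s ≤ a
        · have hseq : s = a := le_antisymm hsa hs.1
          rw [hZ]
          simp only [hseq, if_pos (le_refl a)]
          rw [← hYa]
        · exact if_neg hsa
      refine ⟨Z, ?_, ?_⟩
      · rw [hZX ⟨le_refl 0, ha0⟩, hXn0]
      · intro t ht
        rw [Nat.cast_add, Nat.cast_one, hnb] at ht ⊢
        rcases lt_trichotomy t a with hlt | heq | hgt
        · have hmem : t ∈ Icc 0 a := ⟨ht.1, hlt.le⟩
          have H1 : HasDerivWithinAt Z (g t - G (Z t)) (Icc 0 a) t := by
            have h2 := (hXn t hmem).congr hZX (hZX hmem)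
            rwa [← hZX hmem] at h2
          refine H1.mono_of_mem_nhdsWithin ?_
          refine mem_of_superset (inter_mem_nhdsWithin (Icc 0 b) (Iic_mem_nhds hlt)) ?_
          exact fun s hs => ⟨hs.1.1, hs.2⟩
        · have hmem1 : t ∈ Icc 0 a := ⟨ht.1, heq.le⟩
          have hmem2 : t ∈ Icc a b := ⟨heq.ge, ht.2⟩
          have H1 : HasDerivWithinAt Z (g t - G (Z t)) (Icc 0 a) t := by
            have h2 := (hXn t hmem1).congr hZX (hZX hmem1)
            rwa [← hZX hmem1] at h2
          have H2 : HasDerivWithinAt Z (g t - G (Z t)) (Icc a b) t := by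
            have h2 := (hY t hmem2).congr hZY (hZY hmem2)
            rwa [← hZY hmem2] at h2
          have h3 := H1.union H2
          rwa [Icc_union_Icc_eq_Icc ha0 hble] at h3
        · have hmem : t ∈ Icc a b := ⟨hgt.le, ht.2⟩
          have H2 : HasDerivWithinAt Z (g t - G (Z t)) (Icc a b) t := by
            have h2 := (hY t hmem).congr hZY (hZY hmem)
            rwa [← hZY hmem] at h2
          refine H2.mono_of_mem_nhdsWithin ?_
          refine mem_of_superset (inter_mem_nhdsWithin (Icc 0 b) (Ici_mem_nhds hgt)) ?_
          exact fun s hs => ⟨hs.2, hs.1.2⟩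
  -- choice of solutions
  set sol : ℕ → ℝ → ℝ := fun n => (hP n).choose with hsol
  have hsol0 : ∀ n, sol n 0 = x0 := fun n => (hP n).choose_spec.1
  have hsolD : ∀ n : ℕ, ∀ t ∈ Icc 0 ((n:ℝ)*h),
      HasDerivWithinAt (sol n) (g t - G (sol n t)) (Icc 0 ((n:ℝ)*h)) t :=
    fun n => (hP n).choose_spec.2
  have hvlip : ∀ t : ℝ, LipschitzWith K (fun x => g t - G x) :=
    fun t => LSaux.lip_const_sub hG (g t)
  -- agreement by uniqueness
  have agree : ∀ m n : ℕ, m ≤ n → ∀ s ∈ Icc 0 ((m:ℝ)*h), sol m s = sol n s := by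
    intro m n hmn
    have hle : (m:ℝ)*h ≤ (n:ℝ)*h :=
      mul_le_mul_of_nonneg_right (by exact_mod_cast hmn) h0.le
    have derivconv : ∀ (f : ℝ → ℝ), (∀ t ∈ Icc 0 ((m:ℝ)*h),
        HasDerivWithinAt f (g t - G (f t)) (Icc 0 ((m:ℝ)*h)) t) →
        ∀ t ∈ Ico 0 ((m:ℝ)*h), HasDerivWithinAt f (g t - G (f t)) (Ici t) t := by
      intro f hf t ht
      refine (hf t ⟨ht.1, ht.2.le⟩).mono_of_mem_nhdsWithin ?_
      refine mem_of_superset (inter_mem_nhdsWithin (Ici t) (Iic_mem_nhds ht.2)) ?_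
      exact fun s hs => ⟨ht.1.trans hs.1, hs.2⟩
    have hfm := hsolD m
    have hfn : ∀ t ∈ Icc 0 ((m:ℝ)*h),
        HasDerivWithinAt (sol n) (g t - G (sol n t)) (Icc 0 ((m:ℝ)*h)) t :=
      fun t ht => (hsolD n t ⟨ht.1, ht.2.trans hle⟩).mono (Icc_subset_Icc le_rfl hle)
    exact ODE_solution_unique (v := fun t x => g t - G x) hvlip
      (fun t ht => (hfm t ht).continuousWithinAt)
      (derivconv _ hfm)
      (fun t ht => (hfn t ht).continuousWithinAt)
      (derivconv _ hfn)
      ((hsol0 m).trans (hsol0 n).symm)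
  set X : ℝ → ℝ := fun t => sol (⌊t/h⌋₊ + 1) t with hX
  have hX0 : X 0 = x0 := by
    rw [hX]
    simp only [zero_div, Nat.floor_zero, zero_add]
    exact hsol0 1
  refine ⟨X, hX0, ?_⟩
  intro t ht
  set n : ℕ := ⌊t/h⌋₊ + 1 with hn
  have htn : t < (n:ℝ)*h := by
    have := Nat.lt_floor_add_one (t/h)
    rw [div_lt_iff₀ h0] at this
    calc t < (↑⌊t / h⌋₊ + 1) * h := this
    _ = (n:ℝ)*h := by rw [hn]; push_cast; ring
  have hagreeX : EqOn X (sol n) (Icc 0 ((n:ℝ)*h)) := by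
    intro s hs
    set k : ℕ := ⌊s/h⌋₊ + 1 with hk
    have hsk : s ≤ (k:ℝ)*h := by
      have := Nat.lt_floor_add_one (s/h)
      rw [div_lt_iff₀ h0] at this
      have h2 : (↑⌊s / h⌋₊ + 1) * h = (k:ℝ)*h := by rw [hk]; push_cast; ring
      linarith [h2 ▸ this]
    rcases le_total k n with hkn | hnk
    · exact agree k n hkn s ⟨hs.1, hsk⟩
    · exact (agree n k hnk s hs).symm
  have hD := hsolD n t ⟨ht, htn.le⟩
  have H1 : HasDerivWithinAt X (g t - G (X t)) (Icc 0 ((n:ℝ)*h)) t := by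
    have h2 := hD.congr hagreeX (hagreeX ⟨ht, htn.le⟩)
    rwa [← hagreeX ⟨ht, htn.le⟩] at h2
  refine H1.mono_of_mem_nhdsWithin ?_
  refine mem_of_superset (inter_mem_nhdsWithin (Ici 0) (Iic_mem_nhds htn)) ?_
  exact fun s hs => ⟨hs.1, hs.2⟩


lemma LSaux.key (α R0 M xb : ℝ) (hα : 0 < α) (hR0 : 0 < R0) (hxb0 : 0 ≤ xb)
    (d dE : ℝ → ℝ) (u : ℝ → ℝ → ℝ) (V : ℝ → ℝ) (m q : ℝ → ℝ)
    (hu_nonneg : ∀ t ∈ Set.Ici (0:ℝ), ∀ x ∈ Set.Ici (0:ℝ), 0 ≤ u t x)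
    (master : ∀ x : ℝ, 0 ≤ x → ∀ c : ℝ, α*(x-c)^2 ≤ (x-c)*(d x - dE c))
    (hdExb : dE xb = d xb)
    (hxbM : M = R0*xb + d xb)
    (hmdef : ∀ t, m t = ∫ x in Ioi (0:ℝ), x * u t x)
    (hqdef : ∀ t, q t = ∫ x in Ioi (0:ℝ), x^2 * u t x)
    (hρconst : ∀ t ∈ Ici (0:ℝ), (∫ x in Ioi (0:ℝ), u t x) = R0)
    (hmass : ∀ t ∈ Ici (0:ℝ), V t = M - m t)
    (I1 : ∀ t ∈ Ici (0:ℝ), IntegrableOn (fun x => u t x) (Ioi 0))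
    (Ix : ∀ t ∈ Ici (0:ℝ), IntegrableOn (fun x => x * u t x) (Ioi 0))
    (Ix2 : ∀ t ∈ Ici (0:ℝ), IntegrableOn (fun x => x^2 * u t x) (Ioi 0))
    (Id : ∀ t ∈ Ici (0:ℝ), IntegrableOn (fun x => d x * u t x) (Ioi 0))
    (Ixd : ∀ t ∈ Ici (0:ℝ), IntegrableOn (fun x => (x * d x) * u t x) (Ioi 0))
    (IB : ∀ t ∈ Ici (0:ℝ), ∀ c : ℝ, IntegrableOn (fun x => (x - c)^2 * u t x) (Ioi 0))
    (IA : ∀ t ∈ Ici (0:ℝ), ∀ c k : ℝ,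
      IntegrableOn (fun x => ((x - c) * (d x - k)) * u t x) (Ioi 0))
    (hm' : ∀ t ∈ Ici (0:ℝ), HasDerivWithinAt m
      (V t * R0 - ∫ x in Ioi (0:ℝ), d x * u t x) (Ici 0) t)
    (hq' : ∀ t ∈ Ici (0:ℝ), HasDerivWithinAt q
      (2 * (V t * m t) - 2 * ∫ x in Ioi (0:ℝ), (x * d x) * u t x) (Ici 0) t)
    (X : ℝ → ℝ)
    (hXd : ∀ t ∈ Ici (0:ℝ), HasDerivWithinAt X (V t - dE (X t)) (Ici 0) t) :
    Tendsto X atTop (nhds xb) ∧ Tendsto m atTop (nhds (R0 * xb)) := by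
  classical
  set J : ℝ → ℝ := fun t => q t - 2*(X t * m t) + (X t)^2 * R0 with hJdef
  -- J as an integral
  have hJeq : ∀ t ∈ Ici (0:ℝ), J t = ∫ x in Ioi (0:ℝ), (x - X t)^2 * u t x := by
    intro t ht
    have e1 : (fun x => (x - X t)^2 * u t x)
        = fun x => x^2 * u t x - (2 * X t) * (x * u t x) + (X t)^2 * u t x := by
      funext x; ring
    have ha1 : IntegrableOn (fun x => x^2 * u t x - 2 * X t * (x * u t x)) (Ioi 0) :=
      (Ix2 t ht).sub ((Ix t ht).const_mul (2 * X t))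
    have ha2 : IntegrableOn (fun x => (X t)^2 * u t x) (Ioi 0) :=
      (I1 t ht).const_mul ((X t)^2)
    rw [e1, integral_add ha1 ha2,
      integral_sub (Ix2 t ht) ((Ix t ht).const_mul (2 * X t)),
      integral_const_mul, integral_const_mul, hρconst t ht]
    show q t - 2*(X t * m t) + (X t)^2 * R0 = _
    rw [hmdef, hqdef]
    ring
  have hJnn : ∀ t ∈ Ici (0:ℝ), 0 ≤ J t := by
    intro t ht
    rw [hJeq t ht]
    refine setIntegral_nonneg measurableSet_Ioi (fun x hx => ?_)
    exact mul_nonneg (sq_nonneg _) (hu_nonneg t ht x (Set.mem_Ici.mpr (le_of_lt hx)))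
  -- derivative of J
  have hJ' : ∀ t ∈ Ici (0:ℝ), HasDerivWithinAt J
      (-2 * ∫ x in Ioi (0:ℝ), ((x - X t) * (d x - dE (X t))) * u t x) (Ici 0) t := by
    intro t ht
    have hXt := hXd t ht
    have hmt := hm' t ht
    have hqt := hq' t ht
    have hd1 : HasDerivWithinAt (fun s => X s * m s)
        ((V t - dE (X t)) * m t + X t * (V t * R0 - ∫ x in Ioi (0:ℝ), d x * u t x))
        (Ici 0) t := hXt.mul hmt
    have hd2 : HasDerivWithinAt (fun s => (X s)^2)
        (2 * X t ^ 1 * (V t - dE (X t))) (Ici 0) t := by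
      simpa using hXt.fun_pow 2
    have hD : HasDerivWithinAt J
        ((2 * (V t * m t) - 2 * ∫ x in Ioi (0:ℝ), (x * d x) * u t x)
          - 2 * ((V t - dE (X t)) * m t + X t * (V t * R0 - ∫ x in Ioi (0:ℝ), d x * u t x))
          + (2 * X t ^ 1 * (V t - dE (X t))) * R0) (Ici 0) t :=
      (hqt.sub (hd1.const_mul 2)).add (hd2.mul_const R0)
    convert hD using 1
    -- expand A
    have hA : (∫ x in Ioi (0:ℝ), ((x - X t) * (d x - dE (X t))) * u t x)
        = (∫ x in Ioi (0:ℝ), (x * d x) * u t x) - dE (X t) * m t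
          - X t * (∫ x in Ioi (0:ℝ), d x * u t x) + X t * dE (X t) * R0 := by
      have e1 : (fun x => ((x - X t) * (d x - dE (X t))) * u t x)
          = fun x => ((x * d x) * u t x - (dE (X t)) * (x * u t x)
              - (X t) * (d x * u t x)) + (X t * dE (X t)) * u t x := by
        funext x; ring
      have hb1 : IntegrableOn (fun x => (x * d x) * u t x
          - (dE (X t)) * (x * u t x)) (Ioi 0) :=
        (Ixd t ht).sub ((Ix t ht).const_mul _)
      have hb2 : IntegrableOn (fun x => ((x * d x) * u t x
          - (dE (X t)) * (x * u t x)) - (X t) * (d x * u t x)) (Ioi 0) :=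
        hb1.sub ((Id t ht).const_mul _)
      have hb3 : IntegrableOn (fun x => (X t * dE (X t)) * u t x) (Ioi 0) :=
        (I1 t ht).const_mul _
      rw [e1, integral_add hb2 hb3,
        integral_sub hb1 ((Id t ht).const_mul _),
        integral_sub (Ixd t ht) ((Ix t ht).const_mul _),
        integral_const_mul, integral_const_mul, integral_const_mul, hρconst t ht]
      rw [hmdef]
    rw [hA]
    ring
  -- the differential inequality
  have hJle : ∀ t ∈ Ici (0:ℝ),
      -2 * (∫ x in Ioi (0:ℝ), ((x - X t) * (d x - dE (X t))) * u t x) ≤ -(2*α) * J t := by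
    intro t ht
    have hmono : α * J t ≤ ∫ x in Ioi (0:ℝ), ((x - X t) * (d x - dE (X t))) * u t x := by
      rw [hJeq t ht, ← integral_const_mul]
      refine setIntegral_mono_on ((IB t ht (X t)).const_mul α) (IA t ht (X t) (dE (X t)))
        measurableSet_Ioi (fun x hx => ?_)
      have h1 := master x (le_of_lt hx) (X t)
      have hu0 : 0 ≤ u t x := hu_nonneg t ht x (Set.mem_Ici.mpr (le_of_lt hx))
      calc α * ((x - X t)^2 * u t x) = (α * (x - X t)^2) * u t x := by ring
      _ ≤ ((x - X t) * (d x - dE (X t))) * u t x := mul_le_mul_of_nonneg_right h1 hu0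
    linarith
  -- Gronwall: J t ≤ J 0 * exp (-(2α) t)
  have hexp : ∀ t : ℝ, HasDerivAt (fun s : ℝ => Real.exp ((2*α)*s))
      (Real.exp ((2*α)*t) * (2*α)) t := by
    intro t
    have h1 : HasDerivAt (fun s : ℝ => (2*α)*s) (2*α) t := by
      simpa using (hasDerivAt_id t).const_mul (2*α)
    exact (Real.hasDerivAt_exp ((2*α)*t)).comp t h1
  have hKanti : AntitoneOn (fun t => J t * Real.exp ((2*α)*t)) (Ici 0) := by
    refine LSaux.anti_on (convex_Ici 0)
      (f' := fun t => (-2 * ∫ x in Ioi (0:ℝ), ((x - X t) * (d x - dE (X t))) * u t x)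
        * Real.exp ((2*α)*t) + J t * (Real.exp ((2*α)*t) * (2*α))) ?_ ?_
    · intro t ht
      exact (hJ' t ht).mul (hexp t).hasDerivWithinAt
    · intro t ht
      rw [interior_Ici] at ht
      have h1 := hJle t (Set.mem_Ici.mpr (le_of_lt ht))
      have h2 : (0:ℝ) < Real.exp ((2*α)*t) := Real.exp_pos _
      show (-2 * ∫ x in Ioi (0:ℝ), ((x - X t) * (d x - dE (X t))) * u t x)
          * Real.exp ((2*α)*t) + J t * (Real.exp ((2*α)*t) * (2*α)) ≤ 0
      nlinarith [mul_le_mul_of_nonneg_right h1 h2.le]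
  have hJdecay : ∀ t ∈ Ici (0:ℝ), J t ≤ J 0 * Real.exp (-((2*α)*t)) := by
    intro t ht
    have h1 : J t * Real.exp ((2*α)*t) ≤ J 0 * Real.exp ((2*α)*0) :=
      hKanti (self_mem_Ici) ht ht
    have h2 : (0:ℝ) < Real.exp ((2*α)*t) := Real.exp_pos _
    rw [mul_zero, Real.exp_zero, mul_one] at h1
    rw [Real.exp_neg]
    have h3 : J t ≤ J 0 / Real.exp ((2*α)*t) := (le_div_iff₀ h2).mpr h1
    calc J t ≤ J 0 / Real.exp ((2*α)*t) := h3
    _ = J 0 * (Real.exp ((2*α)*t))⁻¹ := by rw [div_eq_mul_inv]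
  -- the remainder r
  set r : ℝ → ℝ := fun t => m t - R0 * X t with hrdef
  have hrbound : ∀ t ∈ Ici (0:ℝ), ∀ lam : ℝ, 0 < lam →
      |r t| ≤ J t / (2*lam) + lam * R0 / 2 := by
    intro t ht lam hlam
    have hre : r t = ∫ x in Ioi (0:ℝ), (x - X t) * u t x := by
      have e1 : (fun x => (x - X t) * u t x) = fun x => x * u t x - (X t) * u t x := by
        funext x; ring
      show m t - R0 * X t = _
      rw [e1, integral_sub (Ix t ht) ((I1 t ht).const_mul _), integral_const_mul,
        hρconst t ht, hmdef]
      ring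
    rw [hre]
    have habs : |∫ x in Ioi (0:ℝ), (x - X t) * u t x|
        ≤ ∫ x in Ioi (0:ℝ), |(x - X t) * u t x| := by
      have h0 := norm_integral_le_integral_norm (μ := volume.restrict (Ioi 0))
          (f := fun x => (x - X t) * u t x)
      simp only [Real.norm_eq_abs] at h0
      exact h0
    refine habs.trans ?_
    have hint1 : IntegrableOn (fun x => (x - X t) * u t x) (Ioi 0) := by
      have e1 : (fun x => (x - X t) * u t x) = fun x => x * u t x - (X t) * u t x := by
        funext x; ring
      rw [e1]
      exact (Ix t ht).sub ((I1 t ht).const_mul _)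
    have hint2 : IntegrableOn
        (fun x => (1/(2*lam)) * ((x - X t)^2 * u t x) + (lam/2) * u t x) (Ioi 0) :=
      ((IB t ht (X t)).const_mul _).add ((I1 t ht).const_mul _)
    have hmono : ∫ x in Ioi (0:ℝ), |(x - X t) * u t x|
        ≤ ∫ x in Ioi (0:ℝ), ((1/(2*lam)) * ((x - X t)^2 * u t x) + (lam/2) * u t x) := by
      refine setIntegral_mono_on hint1.abs hint2 measurableSet_Ioi (fun x hx => ?_)
      have hu0 : 0 ≤ u t x := hu_nonneg t ht x (Set.mem_Ici.mpr (le_of_lt hx))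
      have key : |x - X t| ≤ (x - X t)^2/(2*lam) + lam/2 := by
        have h1 : 2*lam*|x - X t| ≤ (x - X t)^2 + lam^2 := by
          nlinarith [sq_nonneg (|x - X t| - lam), sq_abs (x - X t)]
        calc |x - X t| = (2*lam*|x - X t|)/(2*lam) := by field_simp
        _ ≤ ((x - X t)^2 + lam^2)/(2*lam) := (div_le_div_iff_of_pos_right (by positivity)).mpr h1
        _ = (x - X t)^2/(2*lam) + lam/2 := by field_simp
      calc |(x - X t) * u t x| = |x - X t| * u t x := by
            rw [abs_mul, abs_of_nonneg hu0]
      _ ≤ ((x - X t)^2/(2*lam) + lam/2) * u t x := mul_le_mul_of_nonneg_right key hu0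
      _ = (1/(2*lam)) * ((x - X t)^2 * u t x) + (lam/2) * u t x := by ring
    refine hmono.trans ?_
    rw [integral_add ((IB t ht (X t)).const_mul _) ((I1 t ht).const_mul _),
      integral_const_mul, integral_const_mul, hρconst t ht, ← hJeq t ht]
    apply le_of_eq
    field_simp
  -- r is eventually small
  have hrsmall : ∀ e : ℝ, 0 < e → ∃ T : ℝ, 0 ≤ T ∧ ∀ t ≥ T, |r t| ≤ e := by
    intro e he
    set lam : ℝ := e/(R0+1) with hlamdef
    have hlam : 0 < lam := by rw [hlamdef]; positivity
    have hlamR0 : lam * R0 / 2 ≤ e/2 := by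
      rw [hlamdef]
      rw [div_le_div_iff₀ (by norm_num) (by norm_num)]
      have h1 : e/(R0+1) * R0 ≤ e := by
        rw [div_mul_eq_mul_div, div_le_iff₀ (by linarith)]
        nlinarith
      linarith
    have hexp0 : Tendsto (fun t : ℝ => J 0 * Real.exp (-((2*α)*t)) / (2*lam)) atTop (𝓝 0) := by
      have h1 : Tendsto (fun t : ℝ => (2*α)*t) atTop atTop :=
        Tendsto.const_mul_atTop (by positivity) tendsto_id
      have h2 : Tendsto (fun t : ℝ => Real.exp (-((2*α)*t))) atTop (𝓝 0) := by
        have := Real.tendsto_exp_neg_atTop_nhds_zero.comp h1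
        exact this
      have h3 := (h2.const_mul (J 0)).div_const (2*lam)
      simpa using h3
    have hev : ∀ᶠ t in atTop, J 0 * Real.exp (-((2*α)*t)) / (2*lam) < e/2 :=
      hexp0.eventually_lt_const (by linarith)
    obtain ⟨T0, hT0⟩ := eventually_atTop.mp hev
    refine ⟨max T0 0, le_max_right _ _, fun t htT => ?_⟩
    have ht0 : (0:ℝ) ≤ t := le_trans (le_max_right T0 0) htT
    have htT0 : T0 ≤ t := le_trans (le_max_left T0 0) htT
    have h5 := hrbound t ht0 lam hlam
    have h6 : J t / (2*lam) ≤ J 0 * Real.exp (-((2*α)*t)) / (2*lam) :=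
      (div_le_div_iff_of_pos_right (by positivity)).mpr (hJdecay t ht0)
    have h7 := hT0 t htT0
    linarith
  have hrtendsto : Tendsto r atTop (𝓝 0) := by
    rw [Metric.tendsto_atTop]
    intro ε hε
    obtain ⟨T, hT0, hT⟩ := hrsmall (ε/2) (by linarith)
    refine ⟨T, fun t htT => ?_⟩
    rw [Real.dist_eq, sub_zero]
    have := hT t htT
    linarith
  -- convergence of X via the trap lemma
  have htendstoX : Tendsto X atTop (𝓝 xb) := by
    rw [Metric.tendsto_atTop]
    intro ε hε
    set ε' : ℝ := ε/2 with hε'def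
    have hε' : 0 < ε' := by rw [hε'def]; linarith
    set cc : ℝ := (R0 + α)*ε'/2 with hccdef
    have hcc : 0 < cc := by rw [hccdef]; positivity
    obtain ⟨T0, hT00, hT0⟩ := hrsmall cc hcc
    have hkey : ∀ t ∈ Ici T0, ((0:ℝ) ≤ t ∧ |r t| ≤ cc ∧
        V t - dE (X t) = -R0*(X t - xb) - (dE (X t) - d xb) - r t) := by
      intro t ht
      have ht0 : (0:ℝ) ≤ t := le_trans hT00 ht
      refine ⟨ht0, hT0 t ht, ?_⟩
      have h1 := hmass t ht0
      have h2 : m t = R0 * X t + r t := by rw [hrdef]; ring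
      rw [h1, h2, hxbM]
      ring
    obtain ⟨T', hT'⟩ := LSaux.trap (w := fun t => X t - xb)
      (w' := fun t => V t - dE (X t)) (T := T0) hcc hε'
      (fun t ht => ((hXd t (le_trans hT00 ht)).sub_const xb).mono
        (Ici_subset_Ici.mpr hT00))
      (fun t ht hwge => by
        obtain ⟨ht0, hrcc, heq⟩ := hkey t ht
        have hwge' : ε' ≤ X t - xb := hwge
        have hmast := master xb hxb0 (X t)
        have hwpos : 0 < X t - xb := lt_of_lt_of_le hε' hwge'
        have hs : α * (X t - xb) ≤ dE (X t) - d xb := by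
          have h3 : (X t - xb) * (α * (X t - xb)) ≤ (X t - xb) * (dE (X t) - d xb) := by
            nlinarith
          exact le_of_mul_le_mul_left h3 hwpos
        have habs := abs_le.mp hrcc
        show V t - dE (X t) ≤ -cc
        rw [heq]
        have hR0w : R0 * ε' ≤ R0 * (X t - xb) :=
          mul_le_mul_of_nonneg_left hwge' hR0.le
        have hαw : α * ε' ≤ α * (X t - xb) :=
          mul_le_mul_of_nonneg_left hwge' hα.le
        have hccval : cc = (R0 + α)*ε'/2 := hccdef
        linarith [habs.1, habs.2]
      )
      (fun t ht hwle => by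
        obtain ⟨ht0, hrcc, heq⟩ := hkey t ht
        have hwle' : X t - xb ≤ -ε' := hwle
        have hmast := master xb hxb0 (X t)
        have hwneg : 0 < -(X t - xb) := by linarith
        have hs : dE (X t) - d xb ≤ α * (X t - xb) := by
          have h3 : (-(X t - xb)) * (-(α * (X t - xb)))
              ≤ (-(X t - xb)) * (-(dE (X t) - d xb)) := by
            nlinarith
          have := le_of_mul_le_mul_left h3 hwneg
          linarith
        have habs := abs_le.mp hrcc
        show cc ≤ V t - dE (X t)
        rw [heq]
        have hR0w : R0 * ε' ≤ R0 * (-(X t - xb)) :=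
          mul_le_mul_of_nonneg_left (by linarith) hR0.le
        have hαw : α * ε' ≤ α * (-(X t - xb)) :=
          mul_le_mul_of_nonneg_left (by linarith) hα.le
        have hccval : cc = (R0 + α)*ε'/2 := hccdef
        linarith [habs.1, habs.2]
      )
    refine ⟨T', fun t htT => ?_⟩
    rw [Real.dist_eq]
    have := hT' t htT
    calc |X t - xb| ≤ ε' := this
    _ < ε := by rw [hε'def]; linarith
  refine ⟨htendstoX, ?_⟩
  have hmfun : m = fun t => R0 * X t + r t := by
    funext t
    rw [hrdef]
    ring
  rw [hmfun]
  have := (htendstoX.const_mul R0).add hrtendsto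
  simpa [mul_comm] using this


set_option maxHeartbeats 3000000 in
theorem LS_convergence_to_critical_size
    (d d' : ℝ → ℝ) (α β : ℝ) (hD : DPlus d d' α β)
    (M : ℝ) (hM : 0 < M) (i0 : ℕ)
    (V : ℝ → ℝ) (u : ℝ → ℝ → ℝ)
    (hsol : WeakSolLSN d M 0 i0 V u)
    (hV0 : d 0 < V 0)
    (hρ0 : 0 < ∫ x in Ioi (0:ℝ), u 0 x)
    (xb : ℝ) (hxb_pos : 0 < xb)
    (hxb : M = (∫ x in Ioi (0:ℝ), u 0 x) * xb + d xb) :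
    Tendsto V atTop (nhds (d xb)) ∧
    ∀ z ∈ Ici (0:ℝ), ∀ X : ℝ → ℝ, X 0 = z →
      (∀ t ∈ Ici (0:ℝ), 0 ≤ X t) →
      (∀ t ∈ Ici (0:ℝ), HasDerivWithinAt X (V t - d (X t)) (Ici 0) t) →
      Tendsto X atTop (nhds xb) := by
  classical
  have hα : 0 < α := hD.alpha_pos
  have hαβ : α ≤ β := (hD.deriv_lb 0 Set.self_mem_Ici).trans (hD.deriv_ub 0 Set.self_mem_Ici)
  have hβ : 0 < β := hα.trans_le hαβ
  have hd0 : 0 ≤ d 0 := hD.nonneg 0 Set.self_mem_Ici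
  have hd_cont : ContinuousOn d (Ici 0) := fun x hx => (hD.hasDeriv x hx).continuousWithinAt
  have hdlb : ∀ y, (0:ℝ) ≤ y → ∀ x, (0:ℝ) ≤ x → y ≤ x → α*(x-y) ≤ d x - d y := by
    intro y hy x hx hyx
    have hmono : MonotoneOn (fun s => d s - α*s) (Ici 0) := by
      refine LSaux.mono_on (convex_Ici 0) (f' := fun s => d' s - α) ?_ ?_
      · intro s hs
        have hc : HasDerivWithinAt (fun z : ℝ => α*z) α (Ici 0) s := by
          simpa using ((hasDerivAt_id s).const_mul α).hasDerivWithinAt (s := Ici 0)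
        exact (hD.hasDeriv s hs).sub hc
      · intro s hs
        rw [interior_Ici] at hs
        have := hD.deriv_lb s (Set.mem_Ici.mpr (le_of_lt hs))
        show d' s - α ≥ 0
        linarith
    have := hmono (Set.mem_Ici.mpr hy) (Set.mem_Ici.mpr hx) hyx
    simp only [] at this
    linarith
  have hdub : ∀ y, (0:ℝ) ≤ y → ∀ x, (0:ℝ) ≤ x → y ≤ x → d x - d y ≤ β*(x-y) := by
    intro y hy x hx hyx
    have hmono : MonotoneOn (fun s => β*s - d s) (Ici 0) := by
      refine LSaux.mono_on (convex_Ici 0) (f' := fun s => β - d' s) ?_ ?_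
      · intro s hs
        have hc : HasDerivWithinAt (fun z : ℝ => β*z) β (Ici 0) s := by
          simpa using ((hasDerivAt_id s).const_mul β).hasDerivWithinAt (s := Ici 0)
        exact hc.sub (hD.hasDeriv s hs)
      · intro s hs
        rw [interior_Ici] at hs
        have := hD.deriv_ub s (Set.mem_Ici.mpr (le_of_lt hs))
        show 0 ≤ β - d' s
        linarith
    have := hmono (Set.mem_Ici.mpr hy) (Set.mem_Ici.mpr hx) hyx
    simp only [] at this
    linarith
  set dE : ℝ → ℝ := fun y => if 0 ≤ y then d y else d 0 + α*y with hdEdef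
  have hdE_eq : ∀ y : ℝ, 0 ≤ y → dE y = d y := fun y hy => if_pos hy
  have master : ∀ x : ℝ, 0 ≤ x → ∀ c : ℝ, α*(x-c)^2 ≤ (x-c)*(d x - dE c) := by
    intro x hx c
    by_cases hc : 0 ≤ c
    · rw [hdE_eq c hc]
      rcases le_total c x with hcx | hxc
      · have := hdlb c hc x hx hcx
        nlinarith
      · have := hdlb x hx c hc hxc
        nlinarith
    · rw [hdEdef]
      simp only [if_neg hc]
      push_neg at hc
      have h1 : α*(x-0) ≤ d x - d 0 := hdlb 0 (le_refl 0) x hx (by linarith)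
      nlinarith
  have hdE_bd : ∀ x y : ℝ, y ≤ x → dE x - dE y ≤ β*(x-y) ∧ 0 ≤ dE x - dE y := by
    intro x y hyx
    rw [hdEdef]
    by_cases hy : 0 ≤ y
    · have hx : 0 ≤ x := hy.trans hyx
      simp only [if_pos hy, if_pos hx]
      refine ⟨hdub y hy x hx hyx, ?_⟩
      have hl := hdlb y hy x hx hyx
      have hm2 : (0:ℝ) ≤ α * (x - y) := mul_nonneg hα.le (by linarith)
      linarith
    · push_neg at hy
      by_cases hx : 0 ≤ x
      · simp only [if_pos hx, if_neg (not_le.mpr hy)]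
        constructor
        · have h1 : d x - d 0 ≤ β*(x-0) := hdub 0 (le_refl 0) x hx (by linarith)
          nlinarith
        · have h1 : α*(x-0) ≤ d x - d 0 := hdlb 0 (le_refl 0) x hx (by linarith)
          nlinarith
      · simp only [if_neg hx, if_neg (not_le.mpr hy)]
        constructor
        · nlinarith
        · nlinarith
  have hdElip : LipschitzWith ⟨β, hβ.le⟩ dE := by
    apply LipschitzWith.of_dist_le_mul
    intro x y
    rcases le_total y x with h | h
    · obtain ⟨h1, h2⟩ := hdE_bd x y h
      rw [Real.dist_eq, Real.dist_eq, abs_of_nonneg h2,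
        abs_of_nonneg (by linarith : (0:ℝ) ≤ x - y)]
      exact h1
    · obtain ⟨h1, h2⟩ := hdE_bd y x h
      rw [Real.dist_eq, Real.dist_eq, abs_sub_comm, abs_sub_comm x y,
        abs_of_nonneg h2, abs_of_nonneg (by linarith : (0:ℝ) ≤ y - x)]
      exact h1
  -- integrability infrastructure
  have hu_nonneg := hsol.u_nonneg
  have hu_int := hsol.u_int
  have hd_bd : ∀ x : ℝ, 0 ≤ x → 0 ≤ d x ∧ d x ≤ d 0 + β*x := by
    intro x hx
    refine ⟨hD.nonneg x hx, ?_⟩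
    have := hdub 0 (le_refl 0) x hx hx
    linarith
  have hmeas : ∀ t ∈ Ici (0:ℝ), AEStronglyMeasurable (u t) (volume.restrict (Ioi 0)) := by
    intro t ht
    have h1 := (hu_int t ht).aestronglyMeasurable
    have h2 : Continuous (fun x : ℝ => (1 + x^2)⁻¹) := by
      apply Continuous.inv₀ (by continuity)
      intro x; positivity
    have h3 : u t = fun x => (1 + x^2)⁻¹ * ((1 + x^2) * u t x) := by
      funext x
      field_simp
    rw [h3]
    exact h2.aestronglyMeasurable.mul h1
  have key_int : ∀ t ∈ Ici (0:ℝ), ∀ f : ℝ → ℝ,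
      AEStronglyMeasurable f (volume.restrict (Ioi 0)) → ∀ C : ℝ,
      (∀ x ∈ Ioi (0:ℝ), |f x| ≤ C * (1 + x^2)) →
      IntegrableOn (fun x => f x * u t x) (Ioi 0) := by
    intro t ht f hf C hC
    have hbig : Integrable (fun x => C * ((1 + x^2) * u t x)) (volume.restrict (Ioi 0)) :=
      (hu_int t ht).const_mul C
    refine hbig.mono' (hf.mul (hmeas t ht)) ?_
    filter_upwards [ae_restrict_mem measurableSet_Ioi] with x hx
    have hu0 : 0 ≤ u t x := hu_nonneg t ht x (Set.mem_Ici.mpr (le_of_lt hx))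
    rw [Real.norm_eq_abs, abs_mul, abs_of_nonneg hu0]
    calc |f x| * u t x ≤ (C * (1 + x^2)) * u t x :=
          mul_le_mul_of_nonneg_right (hC x hx) hu0
    _ = C * ((1 + x^2) * u t x) := by ring
  have I1 : ∀ t ∈ Ici (0:ℝ), IntegrableOn (fun x => u t x) (Ioi 0) := by
    intro t ht
    have := key_int t ht (fun _ => 1) aestronglyMeasurable_const 1
      (fun x hx => by
        show |(1:ℝ)| ≤ 1 * (1 + x^2)
        rw [abs_one]; nlinarith [sq_nonneg x])
    simpa using this
  have Ix : ∀ t ∈ Ici (0:ℝ), IntegrableOn (fun x => x * u t x) (Ioi 0) := by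
    intro t ht
    exact key_int t ht (fun x => x) aestronglyMeasurable_id 1
      (fun x hx => by
        show |x| ≤ 1 * (1 + x^2)
        rw [abs_of_pos hx]; nlinarith [sq_nonneg (x-1)])
  have Ix2 : ∀ t ∈ Ici (0:ℝ), IntegrableOn (fun x => x^2 * u t x) (Ioi 0) := by
    intro t ht
    exact key_int t ht (fun x => x^2) (continuous_pow 2).aestronglyMeasurable 1
      (fun x hx => by
        show |x^2| ≤ 1 * (1 + x^2)
        rw [abs_of_nonneg (sq_nonneg x)]; nlinarith)
  have hdmeas : AEStronglyMeasurable d (volume.restrict (Ioi 0)) :=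
    (hd_cont.mono (Ioi_subset_Ici le_rfl)).aestronglyMeasurable measurableSet_Ioi
  have Id' : ∀ t ∈ Ici (0:ℝ), IntegrableOn (fun x => d x * u t x) (Ioi 0) := by
    intro t ht
    refine key_int t ht d hdmeas (d 0 + β) (fun x hx => ?_)
    obtain ⟨h1, h2⟩ := hd_bd x (le_of_lt hx)
    rw [abs_of_nonneg h1]
    nlinarith [mul_nonneg hd0 (sq_nonneg x), mul_nonneg hβ.le (sq_nonneg (x-1)),
      le_of_lt (Set.mem_Ioi.mp hx)]
  have Ixd : ∀ t ∈ Ici (0:ℝ), IntegrableOn (fun x => (x * d x) * u t x) (Ioi 0) := by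
    intro t ht
    refine key_int t ht (fun x => x * d x) (aestronglyMeasurable_id.mul hdmeas)
      (d 0 + β) (fun x hx => ?_)
    obtain ⟨h1, h2⟩ := hd_bd x (le_of_lt hx)
    have hx0 := le_of_lt (Set.mem_Ioi.mp hx)
    rw [abs_of_nonneg (mul_nonneg hx0 h1)]
    nlinarith [mul_le_mul_of_nonneg_left h2 hx0,
      mul_nonneg hd0 (by nlinarith [sq_nonneg (2*x-1)] : (0:ℝ) ≤ x^2 - x + 1), hβ.le, sq_nonneg x]
  have IB : ∀ t ∈ Ici (0:ℝ), ∀ c : ℝ, IntegrableOn (fun x => (x - c)^2 * u t x) (Ioi 0) := by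
    intro t ht c
    refine key_int t ht (fun x => (x - c)^2)
      ((continuous_id.sub continuous_const).pow 2).aestronglyMeasurable
      (2*(1 + c^2)) (fun x hx => ?_)
    show |(x - c)^2| ≤ 2*(1 + c^2)*(1 + x^2)
    rw [abs_of_nonneg (sq_nonneg _)]
    nlinarith [sq_nonneg (x + c), sq_nonneg (c*x)]
  have IA : ∀ t ∈ Ici (0:ℝ), ∀ c k : ℝ,
      IntegrableOn (fun x => ((x - c) * (d x - k)) * u t x) (Ioi 0) := by
    intro t ht c k
    refine key_int t ht (fun x => (x - c) * (d x - k))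
      (((continuous_id.sub continuous_const).aestronglyMeasurable).mul
        (hdmeas.sub aestronglyMeasurable_const))
      (2*(1 + |c|)*(d 0 + |k| + β)) (fun x hx => ?_)
    show |(x - c) * (d x - k)| ≤ 2*(1 + |c|)*(d 0 + |k| + β) * (1 + x^2)
    have hx0 := le_of_lt (Set.mem_Ioi.mp hx)
    obtain ⟨h1, h2⟩ := hd_bd x hx0
    rw [abs_mul]
    have e1 : |x - c| ≤ (1 + |c|)*(1 + x) := by
      calc |x - c| ≤ |x| + |c| := abs_sub _ _
      _ = x + |c| := by rw [abs_of_nonneg hx0]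
      _ ≤ (1 + |c|)*(1 + x) := by nlinarith [abs_nonneg c]
    have e2 : |d x - k| ≤ (d 0 + |k| + β)*(1 + x) := by
      calc |d x - k| ≤ |d x| + |k| := abs_sub _ _
      _ = d x + |k| := by rw [abs_of_nonneg h1]
      _ ≤ (d 0 + |k| + β)*(1 + x) := by nlinarith [abs_nonneg k]
    calc |x - c| * |d x - k| ≤ ((1 + |c|)*(1 + x)) * ((d 0 + |k| + β)*(1 + x)) := by
          apply mul_le_mul e1 e2 (abs_nonneg _) (by positivity)
    _ = ((1 + |c|)*(d 0 + |k| + β)) * (1 + x)^2 := by ring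
    _ ≤ 2*(1 + |c|)*(d 0 + |k| + β) * (1 + x^2) := by
        have h3 : (1+x)^2 ≤ 2*(1+x^2) := by nlinarith [sq_nonneg (x-1)]
        have h4 : 0 ≤ (1 + |c|)*(d 0 + |k| + β) := by positivity
        nlinarith
  -- moments and their derivatives
  set ρ : ℝ → ℝ := fun t => ∫ x in Ioi (0:ℝ), u t x with hρdef
  set m : ℝ → ℝ := fun t => ∫ x in Ioi (0:ℝ), x * u t x with hmdef
  set q : ℝ → ℝ := fun t => ∫ x in Ioi (0:ℝ), x^2 * u t x with hqdef
  have test1 : IsTest (fun _ => 1) (fun _ => 0) := by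
    refine ⟨fun x hx => hasDerivWithinAt_const x _ 1, continuousOn_const, 1, fun x hx => ?_⟩
    constructor
    · rw [abs_one]; nlinarith [sq_nonneg x]
    · rw [abs_zero]; have : (0:ℝ) ≤ x := hx; nlinarith
  have testx : IsTest (fun x => x) (fun _ => 1) := by
    refine ⟨fun x hx => (hasDerivAt_id x).hasDerivWithinAt, continuousOn_const, 1,
      fun x hx => ?_⟩
    have hx0 : (0:ℝ) ≤ x := hx
    constructor
    · rw [abs_of_nonneg hx0]; nlinarith [sq_nonneg (x-1)]
    · rw [abs_one]; nlinarith
  have testx2 : IsTest (fun x => x^2) (fun x => 2*x) := by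
    refine ⟨fun x hx => ?_, (continuous_const.mul continuous_id).continuousOn, 2,
      fun x hx => ?_⟩
    · simpa using (hasDerivAt_pow 2 x).hasDerivWithinAt (s := Ici 0)
    · have hx0 : (0:ℝ) ≤ x := hx
      constructor
      · rw [abs_of_nonneg (sq_nonneg x)]; nlinarith [sq_nonneg x]
      · rw [abs_of_nonneg (by linarith : (0:ℝ) ≤ 2*x)]; nlinarith
  have hρ' : ∀ t ∈ Ici (0:ℝ), HasDerivWithinAt ρ 0 (Ici 0) t := by
    intro t ht
    have h := hsol.weak _ _ test1 t ht
    have h2 : (fun s => ∫ x in Ioi (0:ℝ), (fun _ => (1:ℝ)) x * u s x) = ρ := by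
      funext s
      rw [hρdef]
      simp
    have h3 : ((∫ x in Ioi (0:ℝ), (fun _ => (0:ℝ)) x * (V t - d x) * u t x)
        + 0 * (fun _ => (1:ℝ)) 0 * V t ^ i0) = 0 := by
      simp
    rw [h2, h3] at h
    exact h
  have hρconst : ∀ t ∈ Ici (0:ℝ), ρ t = ρ 0 := by
    intro t ht
    refine constant_of_has_deriv_right_zero (f := ρ) (a := 0) (b := t) ?_ ?_ t ⟨ht, le_refl t⟩
    · intro s hs
      exact ((hρ' s hs.1).continuousWithinAt).mono (fun y hy => hy.1)
    · intro s hs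
      exact (hρ' s hs.1).mono (Ici_subset_Ici.mpr hs.1)
  have hm' : ∀ t ∈ Ici (0:ℝ), HasDerivWithinAt m
      (V t * ρ 0 - ∫ x in Ioi (0:ℝ), d x * u t x) (Ici 0) t := by
    intro t ht
    have h := hsol.weak _ _ testx t ht
    have h3 : ((∫ x in Ioi (0:ℝ), (fun _ => (1:ℝ)) x * (V t - d x) * u t x)
        + 0 * (0:ℝ) * V t ^ i0) = V t * ρ 0 - ∫ x in Ioi (0:ℝ), d x * u t x := by
      rw [zero_mul, zero_mul, add_zero]
      have e1 : (fun x => (fun _ => (1:ℝ)) x * (V t - d x) * u t x)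
          = fun x => V t * u t x - d x * u t x := by
        funext x; ring
      rw [e1, integral_sub ((I1 t ht).const_mul (V t)) (Id' t ht), integral_const_mul]
      rw [← hρconst t ht]
    rw [h3] at h
    exact h
  have hq' : ∀ t ∈ Ici (0:ℝ), HasDerivWithinAt q
      (2 * (V t * m t) - 2 * ∫ x in Ioi (0:ℝ), (x * d x) * u t x) (Ici 0) t := by
    intro t ht
    have h := hsol.weak _ _ testx2 t ht
    have h3 : ((∫ x in Ioi (0:ℝ), (fun x => 2*x) x * (V t - d x) * u t x)
        + 0 * ((0:ℝ)^2) * V t ^ i0)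
        = 2 * (V t * m t) - 2 * ∫ x in Ioi (0:ℝ), (x * d x) * u t x := by
      rw [zero_mul, zero_mul, add_zero]
      have e1 : (fun x => (fun x => 2*x) x * (V t - d x) * u t x)
          = fun x => (2 * V t) * (x * u t x) - 2 * ((x * d x) * u t x) := by
        funext x; ring
      rw [e1, integral_sub ((Ix t ht).const_mul (2 * V t)) ((Ixd t ht).const_mul 2),
        integral_const_mul, integral_const_mul]
      rw [hmdef]
      ring
    rw [h3] at h
    exact h
  -- mass relation
  have hmass : ∀ t ∈ Ici (0:ℝ), V t = M - m t := by
    intro t ht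
    have := hsol.mass t ht
    rw [hmdef]
    simp only [] at this ⊢
    linarith [this]
  -- the key convergence statement, for any generalized characteristic
  have key : ∀ X : ℝ → ℝ,
      (∀ t ∈ Ici (0:ℝ), HasDerivWithinAt X (V t - dE (X t)) (Ici 0) t) →
      Tendsto X atTop (nhds xb) ∧ Tendsto m atTop (nhds (ρ 0 * xb)) := by
    intro X hXd
    exact LSaux.key α (ρ 0) M xb hα hρ0 hxb_pos.le d dE u V m q hu_nonneg master
      (hdE_eq xb hxb_pos.le) hxb (fun t => congrFun hmdef t) (fun t => congrFun hqdef t)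
      (fun t ht => hρconst t ht) hmass I1 Ix Ix2 Id' Ixd IB IA hm' hq' X hXd
  -- construct one characteristic via Picard-Lindelöf
  have hVcont : ContinuousOn V (Ici 0) := hsol.V_contDiff.continuousOn
  have hgc : Continuous (fun t : ℝ => V (max t 0)) :=
    hVcont.comp_continuous (continuous_id.max continuous_const)
      (fun t => Set.mem_Ici.mpr (le_max_right t 0))
  obtain ⟨X₀, hX₀0, hX₀D⟩ := LSaux.ode_global hgc
    (K := ⟨β, hβ.le⟩) (show (0:ℝ) < β from hβ) hdElip xb
  have hX₀' : ∀ t ∈ Ici (0:ℝ), HasDerivWithinAt X₀ (V t - dE (X₀ t)) (Ici 0) t := by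
    intro t ht
    have h := hX₀D t ht
    have hmax : max t 0 = t := max_eq_left ht
    simpa [hmax] using h
  obtain ⟨hXlim0, hmlim⟩ := key X₀ hX₀'
  constructor
  · have h1 : Tendsto (fun t => M - m t) atTop (nhds (M - ρ 0 * xb)) :=
      tendsto_const_nhds.sub hmlim
    have h2 : M - ρ 0 * xb = d xb := by linarith [hxb]
    rw [← h2]
    have heq : (fun t => M - m t) =ᶠ[atTop] V := by
      filter_upwards [eventually_ge_atTop (0:ℝ)] with t ht
      have := hmass t ht
      linarith
    exact Tendsto.congr' heq h1
  · intro z hz X hX0 hXpos hXD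
    refine (key X ?_).1
    intro t ht
    rw [hdE_eq (X t) (hXpos t ht)]
    exact hXD t ht
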